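/- If ξ is a Poisson random variable with parameter λ > 0 and p ∈ (1,2], then E|ξ - λ|^p ≤ 2^(2-p) · λ. -/

import Mathlib

open MeasureTheory ENNReal

lemma aux_q_tsum (lam : ℝ) : ∑' k : ℕ, lam ^ k / (k.factorial : ℝ) = Real.exp lam := by
  rw [Real.exp_eq_exp_ℝ, NormedSpace.exp_eq_tsum_div]

lemma aux_f1_shift (lam : ℝ) :
    (fun k : ℕ => ((k+1 : ℕ) : ℝ) * (lam ^ (k+1) / ((k+1).factorial : ℝ)))
      = fun k : ℕ => lam * (lam ^ k / (k.factorial : ℝ)) := by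
  funext k
  have hk : ((k.factorial : ℝ)) ≠ 0 := Nat.cast_ne_zero.mpr k.factorial_ne_zero
  rw [Nat.factorial_succ]
  push_cast
  rw [pow_succ]
  field_simp

lemma aux_f1_summable (lam : ℝ) : Summable (fun k : ℕ => (k : ℝ) * (lam ^ k / (k.factorial : ℝ))) := by
  refine (summable_nat_add_iff 1).mp ?_
  rw [aux_f1_shift lam]
  exact (Real.summable_pow_div_factorial lam).mul_left lam

lemma aux_f1_tsum (lam : ℝ) :
    ∑' k : ℕ, (k : ℝ) * (lam ^ k / (k.factorial : ℝ)) = lam * Real.exp lam := by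
  rw [Summable.tsum_eq_zero_add (aux_f1_summable lam)]
  rw [show (fun k : ℕ => ((k+1:ℕ):ℝ) * (lam ^ (k+1) / ((k+1).factorial : ℝ))) = fun k : ℕ => lam * (lam ^ k / (k.factorial : ℝ)) from aux_f1_shift lam]
  rw [tsum_mul_left, aux_q_tsum]
  simp

lemma aux_f2_shift (lam : ℝ) :
    (fun k : ℕ => ((k+2 : ℕ) : ℝ) * (((k+2 : ℕ) : ℝ) - 1) * (lam ^ (k+2) / ((k+2).factorial : ℝ)))
      = fun k : ℕ => lam ^ 2 * (lam ^ k / (k.factorial : ℝ)) := by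
  funext k
  have hk : ((k.factorial : ℝ)) ≠ 0 := Nat.cast_ne_zero.mpr k.factorial_ne_zero
  have h1 : ((k:ℝ) + 1) ≠ 0 := by positivity
  have h2 : ((k:ℝ) + 2) ≠ 0 := by positivity
  rw [show k + 2 = (k+1)+1 from rfl, Nat.factorial_succ, Nat.factorial_succ]
  push_cast
  rw [pow_succ, pow_succ]
  field_simp
  ring

lemma aux_f2_summable (lam : ℝ) :
    Summable (fun k : ℕ => (k : ℝ) * ((k:ℝ) - 1) * (lam ^ k / (k.factorial : ℝ))) := by
  refine (summable_nat_add_iff 2).mp ?_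
  rw [aux_f2_shift lam]
  exact (Real.summable_pow_div_factorial lam).mul_left (lam ^ 2)

lemma aux_f2_tsum (lam : ℝ) :
    ∑' k : ℕ, (k : ℝ) * ((k:ℝ) - 1) * (lam ^ k / (k.factorial : ℝ)) = lam ^ 2 * Real.exp lam := by
  have hs1 : Summable (fun k : ℕ => ((k+1 : ℕ) : ℝ) * (((k+1:ℕ):ℝ) - 1) * (lam ^ (k+1) / ((k+1).factorial : ℝ))) := by
    refine (summable_nat_add_iff 1).mp ?_
    have : (fun k : ℕ => ((k+1+1 : ℕ) : ℝ) * (((k+1+1:ℕ):ℝ) - 1) * (lam ^ (k+1+1) / ((k+1+1).factorial : ℝ)))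
        = (fun k : ℕ => ((k+2 : ℕ) : ℝ) * (((k+2 : ℕ) : ℝ) - 1) * (lam ^ (k+2) / ((k+2).factorial : ℝ))) := rfl
    rw [this, aux_f2_shift lam]
    exact (Real.summable_pow_div_factorial lam).mul_left (lam ^ 2)
  rw [Summable.tsum_eq_zero_add (aux_f2_summable lam), Summable.tsum_eq_zero_add hs1]
  rw [show (fun k : ℕ => ((k+1+1 : ℕ) : ℝ) * (((k+1+1:ℕ):ℝ) - 1) * (lam ^ (k+1+1) / ((k+1+1).factorial : ℝ)))
      = fun k : ℕ => lam ^ 2 * (lam ^ k / (k.factorial : ℝ)) from aux_f2_shift lam]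
  rw [tsum_mul_left, aux_q_tsum]
  norm_num

lemma aux_sq_eq (lam : ℝ) :
    (fun k : ℕ => ((k:ℝ) - lam) ^ 2 * (lam ^ k / (k.factorial : ℝ)))
      = fun k : ℕ => (k : ℝ) * ((k:ℝ) - 1) * (lam ^ k / (k.factorial : ℝ))
        + ((1 - 2*lam) * ((k : ℝ) * (lam ^ k / (k.factorial : ℝ)))
        + lam ^ 2 * (lam ^ k / (k.factorial : ℝ))) := by
  funext k; ring

lemma aux_sq_summable (lam : ℝ) :
    Summable (fun k : ℕ => ((k:ℝ) - lam) ^ 2 * (lam ^ k / (k.factorial : ℝ))) := by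
  rw [aux_sq_eq]
  exact (aux_f2_summable lam).add (((aux_f1_summable lam).mul_left _).add
    ((Real.summable_pow_div_factorial lam).mul_left _))

lemma aux_sq_tsum (lam : ℝ) :
    ∑' k : ℕ, ((k:ℝ) - lam) ^ 2 * (lam ^ k / (k.factorial : ℝ)) = lam * Real.exp lam := by
  rw [aux_sq_eq, Summable.tsum_add (aux_f2_summable lam) (((aux_f1_summable lam).mul_left _).add
      ((Real.summable_pow_div_factorial lam).mul_left _)),
    Summable.tsum_add ((aux_f1_summable lam).mul_left _) ((Real.summable_pow_div_factorial lam).mul_left _),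
    tsum_mul_left, tsum_mul_left, aux_f1_tsum, aux_f2_tsum, aux_q_tsum]
  ring

lemma aux_abs_summable (lam : ℝ) (hlam : 0 ≤ lam) :
    Summable (fun k : ℕ => |(k:ℝ) - lam| * (lam ^ k / (k.factorial : ℝ))) := by
  refine Summable.of_nonneg_of_le (fun k => by positivity) (fun k => ?_)
    ((aux_f1_summable lam).add ((Real.summable_pow_div_factorial lam).mul_left lam))
  have hq : 0 ≤ lam ^ k / (k.factorial : ℝ) := by positivity
  have : |(k:ℝ) - lam| ≤ (k:ℝ) + lam := by
    rw [abs_le]; constructor <;> [nlinarith [Nat.cast_nonneg (α := ℝ) k]; nlinarith]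
  calc |(k:ℝ) - lam| * (lam ^ k / (k.factorial : ℝ)) ≤ ((k:ℝ) + lam) * (lam ^ k / (k.factorial : ℝ)) :=
        mul_le_mul_of_nonneg_right this hq
    _ = (k:ℝ) * (lam ^ k / (k.factorial : ℝ)) + lam * (lam ^ k / (k.factorial : ℝ)) := by ring

lemma aux_abs_tsum_le (lam : ℝ) (hlam : 0 ≤ lam) :
    ∑' k : ℕ, |(k:ℝ) - lam| * (lam ^ k / (k.factorial : ℝ)) ≤ 2 * lam * Real.exp lam := by
  have hsum2 : Summable (fun k : ℕ => (k:ℝ) * (lam ^ k / (k.factorial : ℝ)) + lam * (lam ^ k / (k.factorial : ℝ))) :=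
    (aux_f1_summable lam).add ((Real.summable_pow_div_factorial lam).mul_left lam)
  have h := Summable.tsum_le_tsum (f := fun k : ℕ => |(k:ℝ) - lam| * (lam ^ k / (k.factorial : ℝ)))
    (g := fun k : ℕ => (k:ℝ) * (lam ^ k / (k.factorial : ℝ)) + lam * (lam ^ k / (k.factorial : ℝ)))
    (fun k => ?_) (aux_abs_summable lam hlam) hsum2
  · refine h.trans_eq ?_
    rw [Summable.tsum_add (aux_f1_summable lam) ((Real.summable_pow_div_factorial lam).mul_left lam),
      tsum_mul_left, aux_f1_tsum, aux_q_tsum]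
    ring
  · have hq : 0 ≤ lam ^ k / (k.factorial : ℝ) := by positivity
    have : |(k:ℝ) - lam| ≤ (k:ℝ) + lam := by
      rw [abs_le]; constructor <;> [nlinarith [Nat.cast_nonneg (α := ℝ) k]; nlinarith]
    nlinarith

lemma aux_pointwise (p : ℝ) (hp1 : 1 < p) (hp2 : p ≤ 2) (x : ℝ) :
    |x| ^ p ≤ 2 ^ (2 - p) * ((2 - p) * (|x| / 2) + (p - 1) * x ^ 2) := by
  rcases eq_or_ne x 0 with rfl | hx
  · rw [abs_zero, Real.zero_rpow (by linarith)]
    have h2p : (0:ℝ) < 2 ^ (2 - p) := Real.rpow_pos_of_pos (by norm_num) _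
    norm_num
  · have hax : 0 < |x| := abs_pos.mpr hx
    have key : (|x| / 2) ^ (2 - p) * (x ^ 2) ^ (p - 1) = 2 ^ (p - 2) * |x| ^ p := by
      rw [Real.div_rpow (abs_nonneg x) (by norm_num), ← sq_abs,
        ← Real.rpow_natCast |x| 2]
      rw [← Real.rpow_mul (abs_nonneg x)]
      rw [div_eq_mul_inv, ← Real.rpow_neg (by norm_num : (0:ℝ) ≤ 2)]
      rw [mul_right_comm, ← Real.rpow_add hax]
      push_cast
      rw [show 2 - p + 2 * (p - 1) = p by ring, show -(2 - p) = p - 2 by ring]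
      ring
    have amgm := Real.geom_mean_le_arith_mean2_weighted (by linarith : (0:ℝ) ≤ 2 - p)
      (by linarith : (0:ℝ) ≤ p - 1) (by positivity : (0:ℝ) ≤ |x| / 2)
      (by positivity : (0:ℝ) ≤ x ^ 2) (by ring)
    rw [key] at amgm
    have h2 : (2:ℝ) ^ (2 - p) * (2 ^ (p - 2) * |x| ^ p) = |x| ^ p := by
      rw [← mul_assoc, ← Real.rpow_add (by norm_num : (0:ℝ) < 2)]
      norm_num
    calc |x| ^ p = 2 ^ (2 - p) * (2 ^ (p - 2) * |x| ^ p) := h2.symm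
      _ ≤ 2 ^ (2 - p) * ((2 - p) * (|x| / 2) + (p - 1) * x ^ 2) := by
          apply mul_le_mul_of_nonneg_left amgm (by positivity)

lemma aux_real_bound (lam p : ℝ) (hlam : 0 < lam) (hp1 : 1 < p) (hp2 : p ≤ 2) :
    Summable (fun k : ℕ => |(k:ℝ) - lam| ^ p * (Real.exp (-lam) * lam ^ k / (k.factorial : ℝ)))
    ∧ ∑' k : ℕ, |(k:ℝ) - lam| ^ p * (Real.exp (-lam) * lam ^ k / (k.factorial : ℝ))
        ≤ 2 ^ (2 - p) * lam := by
  set c1 : ℝ := 2 ^ (2 - p) * (2 - p) / 2 with hc1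
  set c2 : ℝ := 2 ^ (2 - p) * (p - 1) with hc2
  have h2p : (0:ℝ) < 2 ^ (2 - p) := Real.rpow_pos_of_pos (by norm_num) _
  have hc1n : 0 ≤ c1 := by rw [hc1]; apply div_nonneg (mul_nonneg h2p.le (by linarith)) (by norm_num)
  have hc2n : 0 ≤ c2 := by rw [hc2]; exact mul_nonneg h2p.le (by linarith)
  set G : ℕ → ℝ := fun k => c1 * (|(k:ℝ) - lam| * (lam ^ k / (k.factorial : ℝ)))
      + c2 * (((k:ℝ) - lam) ^ 2 * (lam ^ k / (k.factorial : ℝ))) with hG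
  have hGsum : Summable G :=
    ((aux_abs_summable lam hlam.le).mul_left c1).add ((aux_sq_summable lam).mul_left c2)
  have hle : ∀ k : ℕ, |(k:ℝ) - lam| ^ p * (lam ^ k / (k.factorial : ℝ)) ≤ G k := by
    intro k
    have hq : (0:ℝ) ≤ lam ^ k / (k.factorial : ℝ) := by positivity
    have h := mul_le_mul_of_nonneg_right (aux_pointwise p hp1 hp2 ((k:ℝ) - lam)) hq
    refine h.trans_eq ?_
    rw [hG, hc1, hc2]; ring
  have hFsum : Summable (fun k : ℕ => |(k:ℝ) - lam| ^ p * (lam ^ k / (k.factorial : ℝ))) := by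
    refine Summable.of_nonneg_of_le (fun k => ?_) hle hGsum
    have h1 : (0:ℝ) ≤ |(k:ℝ) - lam| ^ p := Real.rpow_nonneg (abs_nonneg _) p
    positivity
  have hGtsum : ∑' k, G k ≤ 2 ^ (2 - p) * lam * Real.exp lam := by
    rw [hG, Summable.tsum_add ((aux_abs_summable lam hlam.le).mul_left c1)
        ((aux_sq_summable lam).mul_left c2), tsum_mul_left, tsum_mul_left, aux_sq_tsum]
    have h1 : c1 * ∑' k : ℕ, |(k:ℝ) - lam| * (lam ^ k / (k.factorial : ℝ))
        ≤ c1 * (2 * lam * Real.exp lam) :=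
      mul_le_mul_of_nonneg_left (aux_abs_tsum_le lam hlam.le) hc1n
    have : c1 * (2 * lam * Real.exp lam) + c2 * (lam * Real.exp lam)
        = 2 ^ (2 - p) * lam * Real.exp lam := by rw [hc1, hc2]; ring
    linarith
  have hFtsum : ∑' k : ℕ, |(k:ℝ) - lam| ^ p * (lam ^ k / (k.factorial : ℝ))
      ≤ 2 ^ (2 - p) * lam * Real.exp lam :=
    (Summable.tsum_le_tsum hle hFsum hGsum).trans hGtsum
  have hEpos : (0:ℝ) < Real.exp (-lam) := Real.exp_pos _
  have hrw : (fun k : ℕ => |(k:ℝ) - lam| ^ p * (Real.exp (-lam) * lam ^ k / (k.factorial : ℝ)))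
      = fun k : ℕ => Real.exp (-lam) * (|(k:ℝ) - lam| ^ p * (lam ^ k / (k.factorial : ℝ))) := by
    funext k; ring
  constructor
  · rw [hrw]; exact hFsum.mul_left _
  · rw [hrw, tsum_mul_left]
    have := mul_le_mul_of_nonneg_left hFtsum hEpos.le
    refine this.trans_eq ?_
    rw [show Real.exp (-lam) * (2 ^ (2 - p) * lam * Real.exp lam)
        = 2 ^ (2 - p) * lam * (Real.exp (-lam) * Real.exp lam) by ring, ← Real.exp_add]
    simp

/-- If ξ ~ Poisson(λ) with λ > 0 and p ∈ (1,2], then E|ξ - λ|^p ≤ 2^(2-p)·λ. -/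
theorem poisson_central_moment_bound
    (Ω : Type*) [MeasureSpace Ω] [IsProbabilityMeasure (volume : Measure Ω)]
    (ξ : Ω → ℕ) (hmeas : Measurable ξ) (lam p : ℝ) (hlam : 0 < lam)
    (hp1 : 1 < p) (hp2 : p ≤ 2)
    (hdist : ∀ k : ℕ, volume {ω | ξ ω = k}
      = ENNReal.ofReal (Real.exp (-lam) * lam ^ k / (Nat.factorial k))) :
    ∫⁻ ω, ENNReal.ofReal (|(ξ ω : ℝ) - lam| ^ p)
      ≤ ENNReal.ofReal (2 ^ (2 - p) * lam) := by
  obtain ⟨hsum, hbound⟩ := aux_real_bound lam p hlam hp1 hp2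
  have key : ∫⁻ ω, ENNReal.ofReal (|(ξ ω : ℝ) - lam| ^ p)
      = ∑' k : ℕ, ENNReal.ofReal (|(k:ℝ) - lam| ^ p) * volume {ω | ξ ω = k} := by
    have := lintegral_map (μ := volume) (f := fun k : ℕ => ENNReal.ofReal (|(k:ℝ) - lam| ^ p))
      (g := ξ) (measurable_from_nat (f := fun k : ℕ => ENNReal.ofReal (|(k:ℝ) - lam| ^ p))) hmeas
    rw [← this, lintegral_countable']
    congr 1
    funext k
    congr 1
    rw [Measure.map_apply hmeas (MeasurableSet.singleton k)]
    rfl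
  rw [key]
  have heq : ∀ k : ℕ, ENNReal.ofReal (|(k:ℝ) - lam| ^ p) * volume {ω | ξ ω = k}
      = ENNReal.ofReal (|(k:ℝ) - lam| ^ p * (Real.exp (-lam) * lam ^ k / (k.factorial : ℝ))) := by
    intro k
    rw [hdist k, ← ENNReal.ofReal_mul (Real.rpow_nonneg (abs_nonneg _) p)]
  simp_rw [heq]
  rw [← ENNReal.ofReal_tsum_of_nonneg (fun k => ?_) hsum]
  · exact ENNReal.ofReal_le_ofReal hbound
  · have h1 : (0:ℝ) ≤ |(k:ℝ) - lam| ^ p := Real.rpow_nonneg (abs_nonneg _) p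
    have h2 : (0:ℝ) ≤ Real.exp (-lam) * lam ^ k / (k.factorial : ℝ) := by positivity
    exact mul_nonneg h1 h2
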